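/- For every α ∈ ℕ and every n ∈ ℕ, the number of pairs (x, y) ∈ ℤ² with n = x² + α·y² is at most 6·τ(n)², where τ(n) is the number of positive divisors of n. -/

import Mathlib

lemma ncard_le_two_of_pm {M : Type*} (S : Set M) (a b : M)
    (h : ∀ t ∈ S, t = a ∨ t = b) : S.ncard ≤ 2 := by
  classical
  have hsub : S ⊆ (↑({a, b} : Finset M) : Set M) := by
    intro t ht; simpa using h t ht
  calc S.ncard ≤ (↑({a, b} : Finset M) : Set M).ncard :=
        Set.ncard_le_ncard hsub (Finset.finite_toSet _)
    _ = ({a, b} : Finset M).card := Set.ncard_coe_finset _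
    _ ≤ 2 := Finset.card_le_two

lemma ncard_le_four_of_quad {M : Type*} (S : Set M) (a b c d : M)
    (h : ∀ t ∈ S, t = a ∨ t = b ∨ t = c ∨ t = d) : S.ncard ≤ 4 := by
  classical
  have hsub : S ⊆ (↑({a, b, c, d} : Finset M) : Set M) := by
    intro t ht; simpa using h t ht
  calc S.ncard ≤ (↑({a, b, c, d} : Finset M) : Set M).ncard :=
        Set.ncard_le_ncard hsub (Finset.finite_toSet _)
    _ = ({a, b, c, d} : Finset M).card := Set.ncard_coe_finset _
    _ ≤ 4 := by
        refine le_trans (Finset.card_insert_le _ _) ?_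
        refine Nat.succ_le_succ ?_
        refine le_trans (Finset.card_insert_le _ _) ?_
        refine Nat.succ_le_succ ?_
        refine le_trans (Finset.card_insert_le _ _) ?_
        simp

-- units of ZMod (p^k) detected via projection to ZMod p
lemma isUnit_of_proj_ne_zero {p k : ℕ} (hp : p.Prime) (hk : 1 ≤ k)
    (u : ZMod (p ^ k))
    (h : (ZMod.castHom (dvd_pow_self p (by omega : k ≠ 0)) (ZMod p)) u ≠ 0) :
    IsUnit u := by
  haveI : Fact p.Prime := ⟨hp⟩
  haveI : NeZero (p ^ k) := ⟨pow_ne_zero _ hp.pos.ne'⟩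
  have hu : ((u.val : ℕ) : ZMod (p ^ k)) = u := ZMod.natCast_rightInverse u
  have hproj : ((u.val : ℕ) : ZMod p) ≠ 0 := by
    rw [← map_natCast (ZMod.castHom (dvd_pow_self p (by omega : k ≠ 0)) (ZMod p)), hu]
    exact h
  have hnd : ¬ p ∣ u.val := by
    rwa [Ne, ZMod.natCast_eq_zero_iff] at hproj
  have hcop : (u.val).Coprime (p ^ k) :=
    Nat.Coprime.pow_right _ (hp.coprime_iff_not_dvd.mpr hnd).symm
  rw [← hu]
  exact (ZMod.isUnit_iff_coprime _ _).mpr hcop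

-- field case: ZMod p, any c
lemma roots_card_le_two_field (p : ℕ) (hp : p.Prime) (c : ℤ) :
    {s : ZMod p | s ^ 2 = (c : ZMod p)}.ncard ≤ 2 := by
  haveI : Fact p.Prime := ⟨hp⟩
  rcases Set.eq_empty_or_nonempty {s : ZMod p | s ^ 2 = (c : ZMod p)} with he | ⟨s₀, hs₀⟩
  · rw [he]; simp
  · apply ncard_le_two_of_pm _ s₀ (-s₀)
    intro t ht
    have h1 : t ^ 2 = s₀ ^ 2 := ht.trans hs₀.symm
    have h2 : (t - s₀) * (t + s₀) = 0 := by linear_combination h1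
    rcases mul_eq_zero.mp h2 with h | h
    · exact Or.inl (sub_eq_zero.mp h)
    · exact Or.inr (eq_neg_of_add_eq_zero_left h)

-- odd prime power, c not divisible by p
lemma roots_card_le_two_odd (p k : ℕ) (hp : p.Prime) (hodd : p ≠ 2) (hk : 1 ≤ k)
    (c : ℤ) (hc : ¬ (p : ℤ) ∣ c) :
    {s : ZMod (p ^ k) | s ^ 2 = (c : ZMod (p ^ k))}.ncard ≤ 2 := by
  haveI : Fact p.Prime := ⟨hp⟩
  rcases Set.eq_empty_or_nonempty {s : ZMod (p ^ k) | s ^ 2 = (c : ZMod (p ^ k))}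
    with he | ⟨s₀, hs₀⟩
  · rw [he]; simp
  · apply ncard_le_two_of_pm _ s₀ (-s₀)
    intro t ht
    set π := ZMod.castHom (dvd_pow_self p (by omega : k ≠ 0)) (ZMod p) with hπ
    have hπc : (c : ZMod p) ≠ 0 := by
      rwa [Ne, ZMod.intCast_zmod_eq_zero_iff_dvd]
    have hπt : π t ≠ 0 := by
      intro h0
      apply hπc
      have : (π t) ^ 2 = (c : ZMod p) := by
        rw [← map_pow, ht, map_intCast]
      rw [h0] at this; simpa using this.symm
    have h1 : t ^ 2 = s₀ ^ 2 := ht.trans hs₀.symm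
    have h2 : (t - s₀) * (t + s₀) = 0 := by linear_combination h1
    by_cases hu : π (t + s₀) = 0
    · -- then t - s₀ is a unit
      have two_ne : (2 : ZMod p) ≠ 0 := by
        have : ¬ p ∣ 2 := fun h => hodd ((Nat.prime_dvd_prime_iff_eq hp Nat.prime_two).mp h)
        intro h0
        apply this
        have : ((2 : ℕ) : ZMod p) = 0 := by push_cast; exact h0
        exact (ZMod.natCast_eq_zero_iff 2 p).mp this
      have hsub : π (t - s₀) ≠ 0 := by
        intro h0
        apply hπt
        have : π (t - s₀) + π (t + s₀) = 2 * π t := by push_cast [map_sub, map_add]; ring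
        rw [h0, hu] at this
        have h2t : 2 * π t = 0 := by rw [← this]; ring
        rcases mul_eq_zero.mp h2t with h | h
        · exact absurd h two_ne
        · exact h
      have hunit : IsUnit (t - s₀) := isUnit_of_proj_ne_zero hp hk _ hsub
      have : t + s₀ = 0 := by
        rcases hunit with ⟨u, hu'⟩
        calc t + s₀ = ↑u⁻¹ * (↑u * (t + s₀)) := by rw [← mul_assoc]; simp
          _ = ↑u⁻¹ * ((t - s₀) * (t + s₀)) := by rw [hu']
          _ = 0 := by rw [h2, mul_zero]
      exact Or.inr (eq_neg_of_add_eq_zero_left this)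
    · have hunit : IsUnit (t + s₀) := isUnit_of_proj_ne_zero hp hk _ hu
      have : t - s₀ = 0 := by
        rcases hunit with ⟨u, hu'⟩
        calc t - s₀ = ↑u⁻¹ * (↑u * (t - s₀)) := by rw [← mul_assoc]; simp
          _ = ↑u⁻¹ * ((t + s₀) * (t - s₀)) := by rw [hu']
          _ = 0 := by rw [mul_comm (t + s₀), h2, mul_zero]
      exact Or.inl (sub_eq_zero.mp this)

lemma two_adic_split (j : ℕ) (T S : ℤ) (hT : Odd T) (hS : Odd S)
    (h : (2 : ℤ) ^ (j + 2) ∣ T ^ 2 - S ^ 2) :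
    (2 : ℤ) ^ (j + 1) ∣ T - S ∨ (2 : ℤ) ^ (j + 1) ∣ T + S := by
  obtain ⟨u, hu⟩ := (hT.sub_odd hS)
  obtain ⟨v, hv⟩ := (hT.add_odd hS)
  have hu2 : T - S = 2 * u := by omega
  have hv2 : T + S = 2 * v := by omega
  have hTuv : Odd (u + v) := by
    have : u + v = T := by omega
    rw [this]; exact hT
  have hdvd : (2 : ℤ) ^ j ∣ u * v := by
    have h4 : (2 : ℤ) ^ (j + 2) ∣ 2 ^ 2 * (u * v) := by
      have : T ^ 2 - S ^ 2 = 2 ^ 2 * (u * v) := by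
        have : T ^ 2 - S ^ 2 = (T - S) * (T + S) := by ring
        rw [this, hu2, hv2]; ring
      rwa [this] at h
    have hrw : (2 : ℤ) ^ (j + 2) = 2 ^ 2 * 2 ^ j := by ring
    rw [hrw] at h4
    exact (mul_dvd_mul_iff_left (by norm_num : (2:ℤ)^2 ≠ 0)).mp h4
  rcases Int.even_or_odd u with hue | huo
  · -- u even, so v odd
    have hvo : Odd v := by
      rcases Int.even_or_odd v with hve | hvo
      · exfalso
        have : Even (u + v) := hue.add hve
        exact (Int.not_odd_iff_even.mpr this) hTuv
      · exact hvo
    obtain ⟨w, hw⟩ := hvo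
    have hcop : IsCoprime ((2:ℤ) ^ j) v :=
      (IsCoprime.pow_left (⟨-w, 1, by rw [hw]; ring⟩ : IsCoprime (2:ℤ) v))
    have : (2:ℤ) ^ j ∣ u := hcop.dvd_of_dvd_mul_right hdvd
    left
    obtain ⟨r, hr⟩ := this
    exact ⟨r, by rw [hu2, hr]; ring⟩
  · obtain ⟨w, hw⟩ := huo
    have hcop : IsCoprime ((2:ℤ) ^ j) u :=
      (IsCoprime.pow_left (⟨-w, 1, by rw [hw]; ring⟩ : IsCoprime (2:ℤ) u))
    have : (2:ℤ) ^ j ∣ v := hcop.dvd_of_dvd_mul_left hdvd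
    right
    obtain ⟨r, hr⟩ := this
    exact ⟨r, by rw [hv2, hr]; ring⟩

lemma zmod_cast_eq_of_dvd (m : ℕ) (A B : ℤ) (h : (m : ℤ) ∣ A - B) :
    ((A : ℤ) : ZMod m) = ((B : ℤ) : ZMod m) := by
  rw [ZMod.intCast_eq_intCast_iff]
  have h' : (m : ℤ) ∣ B - A := by
    rw [show B - A = -(A - B) by ring]
    exact dvd_neg.mpr h
  exact Int.modEq_iff_dvd.mpr h'

lemma odd_sq_sub_one (T : ℤ) (hT : Odd T) : (8 : ℤ) ∣ T ^ 2 - 1 := by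
  obtain ⟨a, rfl⟩ := hT
  obtain ⟨b, hb⟩ := Int.even_mul_succ_self a
  exact ⟨b, by linear_combination 4 * hb⟩

lemma roots_card_le_2adic (k : ℕ) (hk : 2 ≤ k) (c : ℤ) (hc : ¬ (2 : ℤ) ∣ c) :
    {s : ZMod (2 ^ k) | s ^ 2 = (c : ZMod (2 ^ k))}.ncard ≤ k + 1 := by
  haveI : NeZero (2 ^ k) := ⟨pow_ne_zero _ two_ne_zero⟩
  rcases Set.eq_empty_or_nonempty {s : ZMod (2 ^ k) | s ^ 2 = (c : ZMod (2 ^ k))}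
    with he | ⟨s₀, hs₀⟩
  · rw [he]; simp
  have key : ∀ t : ZMod (2 ^ k), t ^ 2 = (c : ZMod (2 ^ k)) →
      (((t.val : ℤ) : ZMod (2 ^ k)) = t ∧ (2 : ℤ) ^ k ∣ (t.val : ℤ) ^ 2 - c ∧
        Odd (t.val : ℤ)) := by
    intro t ht
    have hcast : ((t.val : ℤ) : ZMod (2 ^ k)) = t := by
      push_cast
      exact ZMod.natCast_rightInverse t
    have hzero : (((t.val : ℤ) ^ 2 - c : ℤ) : ZMod (2 ^ k)) = 0 := by
      push_cast [hcast]
      rw [ht]; ring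
    have hdvd : (2 : ℤ) ^ k ∣ (t.val : ℤ) ^ 2 - c := by
      have := (ZMod.intCast_zmod_eq_zero_iff_dvd _ (2 ^ k)).mp hzero
      exact_mod_cast this
    refine ⟨hcast, hdvd, ?_⟩
    rcases Int.even_or_odd (t.val : ℤ) with hev | hod
    · exfalso
      apply hc
      have h2 : (2 : ℤ) ∣ (t.val : ℤ) ^ 2 - c :=
        dvd_trans (dvd_pow_self 2 (by omega : k ≠ 0)) hdvd
      have h2' : (2 : ℤ) ∣ (t.val : ℤ) ^ 2 := by
        obtain ⟨r, hr⟩ := hev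
        exact ⟨r * (t.val : ℤ), by rw [hr]; ring⟩
      omega
    · exact hod
  obtain ⟨hScast, hSdvd, hSodd⟩ := key s₀ hs₀
  have hcast2k : ∀ A B : ℤ, (2:ℤ) ^ k ∣ A - B →
      ((A : ℤ) : ZMod (2 ^ k)) = ((B : ℤ) : ZMod (2 ^ k)) := by
    intro A B hAB
    apply zmod_cast_eq_of_dvd
    have : ((2 ^ k : ℕ) : ℤ) = (2 : ℤ) ^ k := by push_cast; ring
    rwa [this]
  have hpow : (2 : ℤ) ^ k = 2 ^ (k - 1) * 2 := by
    rw [← pow_succ]; congr 1; omega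
  rcases eq_or_lt_of_le hk with hk2 | hk3
  · -- k = 2
    have hpm : ∀ t ∈ {s : ZMod (2 ^ k) | s ^ 2 = (c : ZMod (2 ^ k))},
        t = s₀ ∨ t = -s₀ := by
      intro t ht
      obtain ⟨hTcast, hTdvd, hTodd⟩ := key t ht
      have h3 : (8:ℤ) ∣ ((t.val : ℤ) ^ 2 - 1) - ((s₀.val : ℤ) ^ 2 - 1) :=
        dvd_sub (odd_sq_sub_one _ hTodd) (odd_sq_sub_one _ hSodd)
      have h8 : (2 : ℤ) ^ (1 + 2) ∣ (t.val : ℤ) ^ 2 - (s₀.val : ℤ) ^ 2 := by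
        rw [show ((2:ℤ) ^ (1+2)) = 8 by norm_num,
          show (t.val : ℤ) ^ 2 - (s₀.val : ℤ) ^ 2
            = ((t.val : ℤ) ^ 2 - 1) - ((s₀.val : ℤ) ^ 2 - 1) by ring]
        exact h3
      rcases two_adic_split 1 _ _ hTodd hSodd h8 with h | h
      · left
        rw [← hTcast, ← hScast]
        exact hcast2k _ _ (by
          rw [show ((2:ℤ) ^ k) = 2 ^ (1 + 1) by rw [← hk2]]
          exact h)
      · right
        rw [← hTcast, ← hScast]
        have : (((t.val : ℤ)) : ZMod (2^k)) = ((-(s₀.val : ℤ) : ℤ) : ZMod (2^k)) := by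
          apply hcast2k
          rw [show (t.val : ℤ) - -(s₀.val : ℤ) = (t.val : ℤ) + (s₀.val : ℤ) by ring,
            show ((2:ℤ) ^ k) = 2 ^ (1 + 1) by rw [← hk2]]
          exact h
        rw [this]; push_cast; ring
    have := ncard_le_two_of_pm _ s₀ (-s₀) hpm
    omega
  · -- k ≥ 3
    set hh : ZMod (2 ^ k) := (((2:ℤ) ^ (k - 1) : ℤ) : ZMod (2 ^ k)) with hhdef
    have hquad : ∀ t ∈ {s : ZMod (2 ^ k) | s ^ 2 = (c : ZMod (2 ^ k))},
        t = s₀ ∨ t = s₀ + hh ∨ t = -s₀ ∨ t = -s₀ + hh := by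
      intro t ht
      obtain ⟨hTcast, hTdvd, hTodd⟩ := key t ht
      have hTS : (2 : ℤ) ^ (k - 2 + 2) ∣ (t.val : ℤ) ^ 2 - (s₀.val : ℤ) ^ 2 := by
        rw [show k - 2 + 2 = k by omega]
        have := dvd_sub hTdvd hSdvd
        simpa using this
      have hsplit := two_adic_split (k - 2) _ _ hTodd hSodd hTS
      rw [show k - 2 + 1 = k - 1 by omega] at hsplit
      rcases hsplit with ⟨w, hw⟩ | ⟨w, hw⟩
      · rcases Int.even_or_odd w with ⟨r, hr⟩ | ⟨r, hr⟩
        · left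
          rw [← hTcast, ← hScast]
          exact hcast2k _ _ ⟨r, by rw [hw, hr, hpow]; ring⟩
        · right; left
          rw [← hTcast, ← hScast, hhdef]
          have : (((t.val : ℤ)) : ZMod (2^k))
              = (((s₀.val : ℤ) + 2 ^ (k-1) : ℤ) : ZMod (2^k)) :=
            hcast2k _ _ ⟨r, by
              rw [show (t.val : ℤ) - ((s₀.val : ℤ) + 2^(k-1))
                  = ((t.val : ℤ) - (s₀.val : ℤ)) - 2^(k-1) by ring, hw, hr, hpow]
              ring⟩
          rw [this]; push_cast; ring
      · rcases Int.even_or_odd w with ⟨r, hr⟩ | ⟨r, hr⟩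
        · right; right; left
          rw [← hTcast, ← hScast]
          have : (((t.val : ℤ)) : ZMod (2^k)) = ((-(s₀.val : ℤ) : ℤ) : ZMod (2^k)) :=
            hcast2k _ _ ⟨r, by
              rw [show (t.val : ℤ) - -(s₀.val : ℤ)
                  = (t.val : ℤ) + (s₀.val : ℤ) by ring, hw, hr, hpow]
              ring⟩
          rw [this]; push_cast; ring
        · right; right; right
          rw [← hTcast, ← hScast, hhdef]
          have : (((t.val : ℤ)) : ZMod (2^k))
              = ((-(s₀.val : ℤ) + 2 ^ (k-1) : ℤ) : ZMod (2^k)) :=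
            hcast2k _ _ ⟨r, by
              rw [show (t.val : ℤ) - (-(s₀.val : ℤ) + 2^(k-1))
                  = ((t.val : ℤ) + (s₀.val : ℤ)) - 2^(k-1) by ring, hw, hr, hpow]
              ring⟩
          rw [this]; push_cast; ring
    have := ncard_le_four_of_quad _ s₀ (s₀ + hh) (-s₀) (-s₀ + hh) hquad
    omega

lemma roots_card_le_divisors (c : ℤ) :
    ∀ m : ℕ, 0 < m → (∀ p : ℕ, p.Prime → p ∣ m → (p : ℤ) ∣ c → ¬ (p ^ 2 ∣ m)) →
    {s : ZMod m | s ^ 2 = (c : ZMod m)}.ncard ≤ m.divisors.card := by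
  intro m
  induction m using Nat.recOnPosPrimePosCoprime with
  | prime_pow p k hp hk =>
    intro _ hyp
    have hτ : (p ^ k).divisors.card = k + 1 := by
      rw [Nat.divisors_prime_pow hp]
      simp
    by_cases hk1 : k = 1
    · subst hk1
      have hprime : (p ^ 1).Prime := by rw [pow_one]; exact hp
      have := roots_card_le_two_field (p ^ 1) hprime c
      omega
    · have hk2 : 2 ≤ k := by omega
      have hdc : ¬ (p : ℤ) ∣ c := by
        intro h
        exact hyp p hp (dvd_pow_self p (by omega)) h (pow_dvd_pow p hk2)
      by_cases hp2 : p = 2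
      · subst hp2
        have := roots_card_le_2adic k hk2 c hdc
        omega
      · have := roots_card_le_two_odd p k hp hp2 (by omega) c hdc
        omega
  | zero => intro h; omega
  | one =>
    intro _ _
    have hsub : {s : ZMod 1 | s ^ 2 = (c : ZMod 1)} ⊆ ({0} : Set (ZMod 1)) := by
      intro x _
      exact Subsingleton.elim x 0
    calc {s : ZMod 1 | s ^ 2 = (c : ZMod 1)}.ncard
        ≤ ({0} : Set (ZMod 1)).ncard :=
          Set.ncard_le_ncard hsub (Set.finite_singleton 0)
      _ = 1 := Set.ncard_singleton 0
      _ ≤ (1 : ℕ).divisors.card := by simp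
  | coprime a b ha hb hab iha ihb =>
    intro hpos hyp
    haveI : NeZero a := ⟨by omega⟩
    haveI : NeZero b := ⟨by omega⟩
    haveI : NeZero (a * b) := ⟨by positivity⟩
    set e := ZMod.chineseRemainder hab with he
    have hmem : ∀ s : ZMod (a * b), s ^ 2 = (c : ZMod (a * b)) ↔
        ((e s).1 ∈ {x : ZMod a | x ^ 2 = (c : ZMod a)} ∧
         (e s).2 ∈ {y : ZMod b | y ^ 2 = (c : ZMod b)}) := by
      intro s
      have hc' : e ((c : ℤ) : ZMod (a * b)) = (((c : ℤ) : ZMod a), ((c : ℤ) : ZMod b)) := by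
        rw [map_intCast]
        ext <;> simp
      constructor
      · intro hs
        have hpow : e s ^ 2 = (((c : ℤ) : ZMod a), ((c : ℤ) : ZMod b)) := by
          rw [← map_pow, hs, hc']
        constructor
        · show (e s).1 ^ 2 = _
          calc (e s).1 ^ 2 = (e s ^ 2).1 := by simp
            _ = (c : ZMod a) := by rw [hpow]
        · show (e s).2 ^ 2 = _
          calc (e s).2 ^ 2 = (e s ^ 2).2 := by simp
            _ = (c : ZMod b) := by rw [hpow]
      · rintro ⟨h1, h2⟩
        apply e.injective
        rw [map_pow, hc']
        rw [Set.mem_setOf_eq] at h1 h2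
        ext
        · simpa using h1
        · simpa using h2
    have hcard : {s : ZMod (a * b) | s ^ 2 = (c : ZMod (a * b))}.ncard =
        {x : ZMod a | x ^ 2 = (c : ZMod a)}.ncard *
        {y : ZMod b | y ^ 2 = (c : ZMod b)}.ncard := by
      rw [← Nat.card_coe_set_eq, ← Nat.card_coe_set_eq, ← Nat.card_coe_set_eq]
      rw [← Nat.card_prod]
      apply Nat.card_congr
      refine (Equiv.subtypeEquiv e.toEquiv ?_).trans (Equiv.Set.prod _ _)
      intro s
      simp only [Set.mem_setOf_eq, Set.mem_prod]
      exact hmem s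
    rw [hcard, hab.card_divisors_mul]
    have hha : 0 < a := by omega
    have hhb : 0 < b := by omega
    exact Nat.mul_le_mul
      (iha hha (fun p hp hdvd hc => fun hsq => hyp p hp (hdvd.mul_right b) hc (hsq.mul_right b)))
      (ihb hhb (fun p hp hdvd hc => fun hsq => hyp p hp (hdvd.mul_left a) hc (hsq.mul_left a)))

lemma abs_le_of_sq_le (x N : ℤ) (h1 : 1 ≤ N) (h2 : x ^ 2 ≤ N) : -N ≤ x ∧ x ≤ N := by
  constructor <;> nlinarith [sq_nonneg (x + 1), sq_nonneg (x - 1)]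

lemma coprime_of_primitive (α m : ℕ) (x y : ℤ) (hm : (m : ℤ) = x ^ 2 + α * y ^ 2)
    (hprim : Int.gcd x y = 1) : Nat.Coprime y.natAbs m := by
  by_contra h
  have hp : (Nat.gcd y.natAbs m).minFac.Prime := Nat.minFac_prime h
  set p := (Nat.gcd y.natAbs m).minFac with hpdef
  have hpy : (p : ℤ) ∣ y := by
    have h1 : p ∣ y.natAbs := dvd_trans (Nat.minFac_dvd _) (Nat.gcd_dvd_left _ _)
    exact dvd_trans (Int.natCast_dvd_natCast.mpr h1) (Int.natAbs_dvd.mpr dvd_rfl)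
  have hpm : (p : ℤ) ∣ (m : ℤ) :=
    Int.natCast_dvd_natCast.mpr (dvd_trans (Nat.minFac_dvd _) (Nat.gcd_dvd_right _ _))
  have hpx2 : (p : ℤ) ∣ x ^ 2 := by
    have hx2 : x ^ 2 = (m : ℤ) - α * y ^ 2 := by linarith
    rw [hx2]
    exact dvd_sub hpm (Dvd.dvd.mul_left (dvd_pow hpy two_ne_zero) _)
  have hpx : (p : ℤ) ∣ x := (Nat.prime_iff_prime_int.mp hp).dvd_of_dvd_pow hpx2
  have h1 : (p : ℤ) ∣ ((1 : ℕ) : ℤ) := by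
    rw [← hprim]
    exact Int.dvd_coe_gcd hpx hpy
  exact hp.ne_one (Nat.dvd_one.mp (Int.natCast_dvd_natCast.mp h1))

lemma isUnit_intCast_of_coprime (m : ℕ) (y : ℤ) (h : Nat.Coprime y.natAbs m) :
    IsUnit ((y : ℤ) : ZMod m) := by
  rcases Int.natAbs_eq y with hy | hy
  · rw [hy, Int.cast_natCast]
    exact (ZMod.isUnit_iff_coprime _ _).mpr h
  · rw [hy, Int.cast_neg, Int.cast_natCast]
    exact ((ZMod.isUnit_iff_coprime _ _).mpr h).neg

set_option maxHeartbeats 1000000 in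
lemma count_core (α n : ℕ) (hα : 1 ≤ α) (hn : 1 ≤ n)
    (hred : ∀ p : ℕ, p.Prime → p ^ 2 ∣ α → ¬ p ^ 2 ∣ n) :
    Set.ncard {q : ℤ × ℤ | (n : ℤ) = q.1 ^ 2 + (α : ℤ) * q.2 ^ 2} ≤
      6 * n.divisors.card ^ 2 := by
  classical
  have hα1 : (1 : ℤ) ≤ (α : ℤ) := by exact_mod_cast hα
  have hn1 : (1 : ℤ) ≤ (n : ℤ) := by exact_mod_cast hn
  set S := {q : ℤ × ℤ | (n : ℤ) = q.1 ^ 2 + (α : ℤ) * q.2 ^ 2} with hSdef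
  have hbound : S ⊆ Set.Icc ((-(n : ℤ), -(n : ℤ)) : ℤ × ℤ) (((n : ℤ), (n : ℤ)) : ℤ × ℤ) := by
    intro q hq
    have hq' : (n : ℤ) = q.1 ^ 2 + (α : ℤ) * q.2 ^ 2 := hq
    have hαy : q.2 ^ 2 ≤ (α : ℤ) * q.2 ^ 2 := le_mul_of_one_le_left (sq_nonneg _) hα1
    have hαy0 : (0 : ℤ) ≤ (α : ℤ) * q.2 ^ 2 :=
      mul_nonneg (by linarith) (sq_nonneg _)
    have hx2 : q.1 ^ 2 ≤ (n : ℤ) := by linarith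
    have hy2 : q.2 ^ 2 ≤ (n : ℤ) := by linarith [sq_nonneg q.1]
    obtain ⟨ha, hb⟩ := abs_le_of_sq_le _ _ hn1 hx2
    obtain ⟨hc, hd⟩ := abs_le_of_sq_le _ _ hn1 hy2
    exact ⟨⟨ha, hc⟩, ⟨hb, hd⟩⟩
  have hfin : S.Finite := Set.Finite.subset (Set.finite_Icc _ _) hbound
  rw [Set.ncard_eq_toFinset_card S hfin]
  set F := hfin.toFinset with hFdef
  have hmemF : ∀ q : ℤ × ℤ, q ∈ F ↔ (n : ℤ) = q.1 ^ 2 + (α : ℤ) * q.2 ^ 2 := by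
    intro q
    rw [hFdef, Set.Finite.mem_toFinset]
    rfl
  -- each solution has gcd dividing n
  have hgcd_dvd : ∀ q : ℤ × ℤ, (n : ℤ) = q.1 ^ 2 + (α : ℤ) * q.2 ^ 2 →
      (Int.gcd q.1 q.2) ^ 2 ∣ n ∧ 0 < Int.gcd q.1 q.2 := by
    intro q hq'
    have hgne : Int.gcd q.1 q.2 ≠ 0 := by
      intro h0
      obtain ⟨h1, h2⟩ := Int.gcd_eq_zero_iff.mp h0
      rw [h1, h2] at hq'
      norm_num at hq'
      omega
    have hdvd : ((Int.gcd q.1 q.2 : ℕ) : ℤ) ^ 2 ∣ (n : ℤ) := by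
      rw [hq']
      exact dvd_add (pow_dvd_pow_of_dvd (Int.gcd_dvd_left _ _) 2)
        (Dvd.dvd.mul_left (pow_dvd_pow_of_dvd (Int.gcd_dvd_right _ _) 2) _)
    constructor
    · have : (((Int.gcd q.1 q.2) ^ 2 : ℕ) : ℤ) ∣ (n : ℤ) := by push_cast; exact hdvd
      exact_mod_cast this
    · omega
  have hsubset : F ⊆ n.divisors.biUnion
      (fun g => F.filter (fun q => Int.gcd q.1 q.2 = g)) := by
    intro q hq
    rw [Finset.mem_biUnion]
    refine ⟨Int.gcd q.1 q.2, ?_, Finset.mem_filter.mpr ⟨hq, rfl⟩⟩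
    obtain ⟨hd, hpos⟩ := hgcd_dvd q ((hmemF q).mp hq)
    rw [Nat.mem_divisors]
    exact ⟨dvd_trans (dvd_pow_self _ two_ne_zero) hd, by omega⟩
  have hclass : ∀ g ∈ n.divisors,
      (F.filter (fun q => Int.gcd q.1 q.2 = g)).card ≤ 4 * n.divisors.card := by
    intro g hg
    rcases Finset.eq_empty_or_nonempty (F.filter (fun q => Int.gcd q.1 q.2 = g))
      with he | ⟨q₀, hq₀⟩
    · rw [he]; simp
    obtain ⟨hq₀F, hq₀g⟩ := Finset.mem_filter.mp hq₀
    have hq₀' := (hmemF q₀).mp hq₀F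
    obtain ⟨hg2, hgpos0⟩ := hgcd_dvd q₀ hq₀'
    rw [hq₀g] at hg2 hgpos0
    have hgz : (g : ℤ) ≠ 0 := by positivity
    set m := n / g ^ 2 with hmdef
    have hgm : g ^ 2 * m = n := Nat.mul_div_cancel' hg2
    have hm1 : 1 ≤ m := by
      rcases Nat.eq_zero_or_pos m with h0 | h1
      · rw [h0, mul_zero] at hgm; omega
      · omega
    haveI : NeZero m := ⟨by omega⟩
    have hgmZ : ((g : ℤ)) ^ 2 * (m : ℤ) = (n : ℤ) := by exact_mod_cast congrArg (Nat.cast : ℕ → ℤ) hgm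
    -- primitive decomposition for members of the class
    have decomp : ∀ q ∈ F.filter (fun q => Int.gcd q.1 q.2 = g),
        ∃ a b : ℤ, q.1 = (g : ℤ) * a ∧ q.2 = (g : ℤ) * b ∧ q.1 / (g : ℤ) = a ∧
          q.2 / (g : ℤ) = b ∧ (m : ℤ) = a ^ 2 + (α : ℤ) * b ^ 2 ∧ Int.gcd a b = 1 := by
      intro q hq
      obtain ⟨hqF, hqg⟩ := Finset.mem_filter.mp hq
      have hq' := (hmemF q).mp hqF
      have h1 : (g : ℤ) ∣ q.1 := by rw [← hqg]; exact Int.gcd_dvd_left _ _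
      have h2 : (g : ℤ) ∣ q.2 := by rw [← hqg]; exact Int.gcd_dvd_right _ _
      obtain ⟨a, ha⟩ := h1
      obtain ⟨b, hb⟩ := h2
      have hag : q.1 / (g : ℤ) = a := by rw [ha]; exact Int.mul_ediv_cancel_left _ hgz
      have hbg : q.2 / (g : ℤ) = b := by rw [hb]; exact Int.mul_ediv_cancel_left _ hgz
      refine ⟨a, b, ha, hb, hag, hbg, ?_, ?_⟩
      · have hexp : ((g : ℤ)) ^ 2 * ((m : ℤ)) = ((g : ℤ)) ^ 2 * (a ^ 2 + (α : ℤ) * b ^ 2) := by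
          rw [hgmZ, hq', ha, hb]; ring
        exact mul_left_cancel₀ (pow_ne_zero 2 hgz) hexp
      · have := Int.gcd_div_gcd_div_gcd (by rw [hqg]; exact hgpos0 : 0 < Int.gcd q.1 q.2)
        rw [hqg] at this
        rw [← hag, ← hbg]
        exact this
    -- the map to square roots of -α mod m
    set f : ℤ × ℤ → ZMod m :=
      fun q => (((q.1 / (g : ℤ)) : ℤ) : ZMod m) * ((((q.2 / (g : ℤ)) : ℤ) : ZMod m))⁻¹
      with hfdef
    have hunit : ∀ q ∈ F.filter (fun q => Int.gcd q.1 q.2 = g),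
        IsUnit ((((q.2 / (g : ℤ)) : ℤ) : ZMod m)) := by
      intro q hq
      obtain ⟨a, b, ha, hb, hag, hbg, hmeq, hprim⟩ := decomp q hq
      rw [hbg]
      exact isUnit_intCast_of_coprime m b (coprime_of_primitive α m a b hmeq hprim)
    have hxsy : ∀ q ∈ F.filter (fun q => Int.gcd q.1 q.2 = g),
        (((q.1 / (g : ℤ)) : ℤ) : ZMod m) = f q * (((q.2 / (g : ℤ)) : ℤ) : ZMod m) := by
      intro q hq
      have hu := hunit q hq
      rw [hfdef]
      dsimp only
      rw [mul_assoc, ZMod.inv_mul_of_unit _ hu, mul_one]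
    have hroot : ∀ q ∈ F.filter (fun q => Int.gcd q.1 q.2 = g),
        (f q) ^ 2 = (((-(α : ℤ)) : ℤ) : ZMod m) := by
      intro q hq
      obtain ⟨a, b, ha, hb, hag, hbg, hmeq, hprim⟩ := decomp q hq
      have hu := hunit q hq
      rw [hbg] at hu
      set u : ZMod m := ((b : ℤ) : ZMod m) with hudef
      have e1 : ((a : ℤ) : ZMod m) ^ 2 + ((α : ℕ) : ZMod m) * u ^ 2 = 0 := by
        have h := congrArg (fun z : ℤ => ((z : ℤ) : ZMod m)) hmeq
        push_cast at h
        rw [ZMod.natCast_self] at h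
        exact h.symm
      have hx2 : ((a : ℤ) : ZMod m) ^ 2 = -(((α : ℕ) : ZMod m)) * u ^ 2 := by
        have := eq_neg_of_add_eq_zero_left e1
        rw [this]; ring
      have hfq : ((a : ℤ) : ZMod m) = f q * u := by
        have := hxsy q hq
        rw [hag, hbg] at this
        exact this
      have huu : u * u⁻¹ = 1 := ZMod.mul_inv_of_unit u hu
      calc (f q) ^ 2 = (f q) ^ 2 * 1 ^ 2 := by ring
        _ = (f q) ^ 2 * (u * u⁻¹) ^ 2 := by rw [huu]
        _ = (f q * u) ^ 2 * (u⁻¹) ^ 2 := by ring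
        _ = ((a : ℤ) : ZMod m) ^ 2 * (u⁻¹) ^ 2 := by rw [← hfq]
        _ = -(((α : ℕ) : ZMod m)) * (u * u⁻¹) ^ 2 := by rw [hx2]; ring
        _ = -(((α : ℕ) : ZMod m)) := by rw [huu]; ring
        _ = (((-(α : ℤ)) : ℤ) : ZMod m) := by push_cast; ring
    -- fibers of f have at most 4 elements
    have hfiber : ∀ s ∈ (F.filter (fun q => Int.gcd q.1 q.2 = g)).image f,
        ((F.filter (fun q => Int.gcd q.1 q.2 = g)).filter (fun q => f q = s)).card ≤ 4 := by
      intro s hs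
      obtain ⟨q₁, hq₁, hfq₁⟩ := Finset.mem_image.mp hs
      obtain ⟨a1, b1, ha1, hb1, hag1, hbg1, hmeq1, hprim1⟩ := decomp q₁ hq₁
      have hsub : (F.filter (fun q => Int.gcd q.1 q.2 = g)).filter (fun q => f q = s) ⊆
          ({q₁, (-q₁.1, -q₁.2), (-(g : ℤ) * b1, (g : ℤ) * a1),
            ((g : ℤ) * b1, -(g : ℤ) * a1)} : Finset (ℤ × ℤ)) := by
        intro q hq
        obtain ⟨hqmem, hfq⟩ := Finset.mem_filter.mp hq
        obtain ⟨a2, b2, ha2, hb2, hag2, hbg2, hmeq2, hprim2⟩ := decomp q hqmem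
        -- congruence: m ∣ B
        have hfeq : f q = f q₁ := by rw [hfq, hfq₁]
        have hBzero : (((a1 * b2 - a2 * b1 : ℤ)) : ZMod m) = 0 := by
          have h1 : ((a1 : ℤ) : ZMod m) = f q₁ * ((b1 : ℤ) : ZMod m) := by
            have := hxsy q₁ hq₁; rw [hag1, hbg1] at this; exact this
          have h2 : ((a2 : ℤ) : ZMod m) = f q₁ * ((b2 : ℤ) : ZMod m) := by
            have := hxsy q hqmem; rw [hag2, hbg2, hfeq] at this; exact this
          push_cast
          rw [h1, h2]
          ring
        have hB : (m : ℤ) ∣ a1 * b2 - a2 * b1 :=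
          (ZMod.intCast_zmod_eq_zero_iff_dvd _ m).mp hBzero
        set A : ℤ := a1 * a2 + (α : ℤ) * b1 * b2 with hAdef
        set B : ℤ := a1 * b2 - a2 * b1 with hBdef
        have hAB : A ^ 2 + (α : ℤ) * B ^ 2 = (m : ℤ) ^ 2 := by
          have hexp : A ^ 2 + (α : ℤ) * B ^ 2
              = (a1 ^ 2 + (α : ℤ) * b1 ^ 2) * (a2 ^ 2 + (α : ℤ) * b2 ^ 2) := by
            rw [hAdef, hBdef]; ring
          rw [hexp, ← hmeq1, ← hmeq2]; ring
        obtain ⟨t, ht⟩ := hB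
        have hm1Z : (1 : ℤ) ≤ (m : ℤ) := by exact_mod_cast hm1
        have hm2 : (1 : ℤ) ≤ (m : ℤ) ^ 2 := by
          calc (1 : ℤ) = 1 * 1 := by ring
            _ ≤ (m : ℤ) * (m : ℤ) := mul_le_mul hm1Z hm1Z (by linarith) (by linarith)
            _ = (m : ℤ) ^ 2 := by ring
        have hkey : (m : ℤ) ^ 2 * t ^ 2 ≤ (m : ℤ) ^ 2 := by
          have hBt : B ^ 2 = (m : ℤ) ^ 2 * t ^ 2 := by rw [ht]; ring
          have hb1' : B ^ 2 ≤ (α : ℤ) * B ^ 2 := le_mul_of_one_le_left (sq_nonneg _) hα1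
          have hb2' : (α : ℤ) * B ^ 2 ≤ (m : ℤ) ^ 2 := by
            have := sq_nonneg A
            linarith
          linarith
        have ht2 : t ^ 2 ≤ 1 := by
          by_contra hcon
          push_neg at hcon
          have h1' : (2 : ℤ) ≤ t ^ 2 := by omega
          have h2' : (m : ℤ) ^ 2 * 2 ≤ (m : ℤ) ^ 2 * t ^ 2 :=
            mul_le_mul_of_nonneg_left h1' (by positivity)
          linarith
        obtain ⟨htl, htu⟩ := abs_le_of_sq_le t 1 le_rfl ht2
        have hX : (m : ℤ) * a2 = A * a1 - (α : ℤ) * B * b1 := by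
          rw [hAdef, hBdef]; linear_combination a2 * hmeq1
        have hY : (m : ℤ) * b2 = B * a1 + A * b1 := by
          rw [hAdef, hBdef]; linear_combination b2 * hmeq1
        have hmne : (m : ℤ) ≠ 0 := by omega
        simp only [Finset.mem_insert, Finset.mem_singleton]
        interval_cases t
        · -- t = -1 : B = -m, α = 1, A = 0
          have hBm : B = -(m : ℤ) := by omega
          have hBsq : (α : ℤ) * B ^ 2 = (α : ℤ) * (m : ℤ) ^ 2 := by rw [hBm]; ring
          have hprod : 0 ≤ ((α : ℤ) - 1) * (m : ℤ) ^ 2 :=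
            mul_nonneg (by linarith) (sq_nonneg _)
          have hexp : ((α : ℤ) - 1) * (m : ℤ) ^ 2 = (α : ℤ) * (m : ℤ) ^ 2 - (m : ℤ) ^ 2 := by
            ring
          have hA2 : A ^ 2 = 0 := le_antisymm (by linarith) (sq_nonneg A)
          have hA0 : A = 0 := sq_eq_zero_iff.mp hA2
          have hα1' : (α : ℤ) = 1 := by
            have hmul : (α : ℤ) * (m : ℤ) ^ 2 = 1 * (m : ℤ) ^ 2 := by
              rw [one_mul]
              have hA0' : A ^ 2 = 0 := hA2
              linarith
            exact mul_right_cancel₀ (by positivity) hmul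
          right; right; right
          have hx : a2 = b1 := by
            have := hX
            rw [hA0, hBm, hα1'] at this
            have h' : (m : ℤ) * a2 = (m : ℤ) * b1 := by linarith
            exact mul_left_cancel₀ hmne h'
          have hy : b2 = -a1 := by
            have := hY
            rw [hA0, hBm] at this
            have h' : (m : ℤ) * b2 = (m : ℤ) * (-a1) := by linarith
            exact mul_left_cancel₀ hmne h'
          have : q = ((g : ℤ) * b1, -(g : ℤ) * a1) := by
            have e1 : q.1 = (g : ℤ) * b1 := by rw [ha2, hx]
            have e2 : q.2 = -(g : ℤ) * a1 := by rw [hb2, hy]; ring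
            exact Prod.ext e1 e2
          exact this
        · -- t = 0 : B = 0, A = ± m
          have hB0 : B = 0 := by omega
          have hA2 : (A - m) * (A + m) = 0 := by
            have : A ^ 2 = (m : ℤ) ^ 2 := by rw [← hAB, hB0]; ring
            linear_combination this
          rcases mul_eq_zero.mp hA2 with hA | hA
          · left
            have hAm : A = (m : ℤ) := by linarith [sub_eq_zero.mp hA]
            have hx : a2 = a1 := by
              have := hX
              rw [hAm, hB0] at this
              have h' : (m : ℤ) * a2 = (m : ℤ) * a1 := by linarith
              exact mul_left_cancel₀ hmne h'
            have hy : b2 = b1 := by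
              have := hY
              rw [hAm, hB0] at this
              have h' : (m : ℤ) * b2 = (m : ℤ) * b1 := by linarith
              exact mul_left_cancel₀ hmne h'
            have e1 : q.1 = q₁.1 := by rw [ha2, hx, ← ha1]
            have e2 : q.2 = q₁.2 := by rw [hb2, hy, ← hb1]
            exact Prod.ext e1 e2
          · right; left
            have hAm : A = -(m : ℤ) := by
              have := eq_neg_of_add_eq_zero_left hA
              linarith
            have hx : a2 = -a1 := by
              have := hX
              rw [hAm, hB0] at this
              have h' : (m : ℤ) * a2 = (m : ℤ) * (-a1) := by linarith
              exact mul_left_cancel₀ hmne h'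
            have hy : b2 = -b1 := by
              have := hY
              rw [hAm, hB0] at this
              have h' : (m : ℤ) * b2 = (m : ℤ) * (-b1) := by linarith
              exact mul_left_cancel₀ hmne h'
            have e1 : q.1 = -q₁.1 := by rw [ha2, hx, ha1]; ring
            have e2 : q.2 = -q₁.2 := by rw [hb2, hy, hb1]; ring
            exact Prod.ext e1 e2
        · -- t = 1 : B = m, α = 1, A = 0
          have hBm : B = (m : ℤ) := by omega
          have hBsq : (α : ℤ) * B ^ 2 = (α : ℤ) * (m : ℤ) ^ 2 := by rw [hBm]
          have hprod : 0 ≤ ((α : ℤ) - 1) * (m : ℤ) ^ 2 :=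
            mul_nonneg (by linarith) (sq_nonneg _)
          have hexp : ((α : ℤ) - 1) * (m : ℤ) ^ 2 = (α : ℤ) * (m : ℤ) ^ 2 - (m : ℤ) ^ 2 := by
            ring
          have hA2 : A ^ 2 = 0 := le_antisymm (by linarith) (sq_nonneg A)
          have hA0 : A = 0 := sq_eq_zero_iff.mp hA2
          right; right; left
          have hx : a2 = -b1 := by
            have hα1' : (α : ℤ) = 1 := by
              have hmul : (α : ℤ) * (m : ℤ) ^ 2 = 1 * (m : ℤ) ^ 2 := by
                rw [one_mul]
                linarith
              exact mul_right_cancel₀ (by positivity) hmul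
            have := hX
            rw [hA0, hBm, hα1'] at this
            have h' : (m : ℤ) * a2 = (m : ℤ) * (-b1) := by linarith
            exact mul_left_cancel₀ hmne h'
          have hy : b2 = a1 := by
            have := hY
            rw [hA0, hBm] at this
            have h' : (m : ℤ) * b2 = (m : ℤ) * a1 := by linarith
            exact mul_left_cancel₀ hmne h'
          have e1 : q.1 = -(g : ℤ) * b1 := by rw [ha2, hx]; ring
          have e2 : q.2 = (g : ℤ) * a1 := by rw [hb2, hy]
          exact Prod.ext e1 e2
      calc ((F.filter (fun q => Int.gcd q.1 q.2 = g)).filter (fun q => f q = s)).card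
          ≤ ({q₁, (-q₁.1, -q₁.2), (-(g : ℤ) * b1, (g : ℤ) * a1),
              ((g : ℤ) * b1, -(g : ℤ) * a1)} : Finset (ℤ × ℤ)).card :=
            Finset.card_le_card hsub
        _ ≤ 4 := by
            refine le_trans (Finset.card_insert_le _ _) ?_
            refine Nat.succ_le_succ ?_
            refine le_trans (Finset.card_insert_le _ _) ?_
            refine Nat.succ_le_succ ?_
            refine le_trans (Finset.card_insert_le _ _) ?_
            simp
    -- the image is contained in the square roots of -α mod m
    have himage : ((F.filter (fun q => Int.gcd q.1 q.2 = g)).image f).card ≤ n.divisors.card := by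
      have hsub2 : (F.filter (fun q => Int.gcd q.1 q.2 = g)).image f ⊆
          Finset.univ.filter (fun s : ZMod m => s ^ 2 = (((-(α : ℤ)) : ℤ) : ZMod m)) := by
        intro s hs
        obtain ⟨q, hq, hfq⟩ := Finset.mem_image.mp hs
        rw [Finset.mem_filter]
        exact ⟨Finset.mem_univ _, by rw [← hfq]; exact hroot q hq⟩
      have hmdvdn : m ∣ n := ⟨g ^ 2, by rw [← hgm]; ring⟩
      have hhyp : ∀ p : ℕ, p.Prime → p ∣ m → (p : ℤ) ∣ (-(α : ℤ)) → ¬ p ^ 2 ∣ m := by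
        intro p hp hpm hpα hp2m
        have hpα' : p ∣ α := Int.natCast_dvd_natCast.mp (dvd_neg.mp hpα)
        obtain ⟨a0, b0, ha0, hb0, hag0, hbg0, hmeq0, hprim0⟩ := decomp q₀ hq₀
        by_cases hp2α : p ^ 2 ∣ α
        · exact hred p hp hp2α (dvd_trans hp2m hmdvdn)
        · have hpmZ : (p : ℤ) ∣ (m : ℤ) := Int.natCast_dvd_natCast.mpr hpm
          have hpa2 : (p : ℤ) ∣ a0 ^ 2 := by
            have h' : a0 ^ 2 = (m : ℤ) - (α : ℤ) * b0 ^ 2 := by linarith [hmeq0]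
            rw [h']
            exact dvd_sub hpmZ
              (Dvd.dvd.mul_right (Int.natCast_dvd_natCast.mpr hpα') _)
          have hpa : (p : ℤ) ∣ a0 := (Nat.prime_iff_prime_int.mp hp).dvd_of_dvd_pow hpa2
          obtain ⟨X, hXeq⟩ := hpa
          have hp2ab : (p : ℤ) ^ 2 ∣ (α : ℤ) * b0 ^ 2 := by
            have h' : (α : ℤ) * b0 ^ 2 = (m : ℤ) - a0 ^ 2 := by linarith [hmeq0]
            rw [h']
            refine dvd_sub ?_ ⟨X ^ 2, by rw [hXeq]; ring⟩
            have := Int.natCast_dvd_natCast.mpr hp2m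
            push_cast at this
            exact this
          have hpb : ¬ p ∣ b0.natAbs := by
            intro hdvd
            have hcop := coprime_of_primitive α m a0 b0 hmeq0 hprim0
            have : p ∣ Nat.gcd b0.natAbs m := Nat.dvd_gcd hdvd hpm
            rw [Nat.Coprime] at hcop
            rw [hcop] at this
            exact hp.ne_one (Nat.dvd_one.mp this)
          have hnat : p ^ 2 ∣ α * b0.natAbs ^ 2 := by
            have hcast : ((α * b0.natAbs ^ 2 : ℕ) : ℤ) = (α : ℤ) * b0 ^ 2 := by
              push_cast [sq_abs]
              ring
            have : ((p ^ 2 : ℕ) : ℤ) ∣ ((α * b0.natAbs ^ 2 : ℕ) : ℤ) := by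
              rw [hcast]; push_cast; exact_mod_cast hp2ab
            exact_mod_cast this
          have hcop2 : (p ^ 2).Coprime (b0.natAbs ^ 2) :=
            Nat.Coprime.pow _ _ (hp.coprime_iff_not_dvd.mpr hpb)
          exact hp2α (hcop2.dvd_of_dvd_mul_right hnat)
      have hroots : (Finset.univ.filter
          (fun s : ZMod m => s ^ 2 = (((-(α : ℤ)) : ℤ) : ZMod m))).card ≤ m.divisors.card := by
        have hset : (↑(Finset.univ.filter
            (fun s : ZMod m => s ^ 2 = (((-(α : ℤ)) : ℤ) : ZMod m))) : Set (ZMod m)) =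
            {s : ZMod m | s ^ 2 = (((-(α : ℤ)) : ℤ) : ZMod m)} := by
          ext s; simp
        have := roots_card_le_divisors (-(α : ℤ)) m (by omega) hhyp
        rw [← hset, Set.ncard_coe_finset] at this
        exact this
      calc ((F.filter (fun q => Int.gcd q.1 q.2 = g)).image f).card
          ≤ (Finset.univ.filter
              (fun s : ZMod m => s ^ 2 = (((-(α : ℤ)) : ℤ) : ZMod m))).card :=
            Finset.card_le_card hsub2
        _ ≤ m.divisors.card := hroots
        _ ≤ n.divisors.card :=
            Finset.card_le_card (Nat.divisors_subset_of_dvd (by omega) hmdvdn)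
    calc (F.filter (fun q => Int.gcd q.1 q.2 = g)).card
        ≤ 4 * ((F.filter (fun q => Int.gcd q.1 q.2 = g)).image f).card :=
          Finset.card_le_mul_card_image _ 4 hfiber
      _ ≤ 4 * n.divisors.card := by omega
  calc F.card ≤ ∑ g ∈ n.divisors, (F.filter (fun q => Int.gcd q.1 q.2 = g)).card :=
        le_trans (Finset.card_le_card hsubset) Finset.card_biUnion_le
    _ ≤ n.divisors.card • (4 * n.divisors.card) :=
        Finset.sum_le_card_nsmul _ _ _ hclass
    _ = 4 * n.divisors.card ^ 2 := by rw [smul_eq_mul]; ring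
    _ ≤ 6 * n.divisors.card ^ 2 := by omega

lemma main_aux (α : ℕ) : ∀ n : ℕ, 1 ≤ α → 1 ≤ n →
    Set.ncard {q : ℤ × ℤ | (n : ℤ) = q.1 ^ 2 + (α : ℤ) * q.2 ^ 2} ≤
      6 * n.divisors.card ^ 2 := by
  induction α using Nat.strong_induction_on with
  | _ α IH =>
    intro n hα hn
    by_cases hex : ∃ p : ℕ, p.Prime ∧ p ^ 2 ∣ α ∧ p ^ 2 ∣ n
    · obtain ⟨p, hp, hpα, hpn⟩ := hex
      obtain ⟨α', hα'⟩ := hpα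
      obtain ⟨n', hn'⟩ := hpn
      have hp1 : 1 < p := hp.one_lt
      have hp2 : 1 < p ^ 2 := Nat.one_lt_pow two_ne_zero hp1
      have hα'1 : 1 ≤ α' := by
        rcases Nat.eq_zero_or_pos α' with h0 | h1
        · rw [h0, mul_zero] at hα'; omega
        · omega
      have hn'1 : 1 ≤ n' := by
        rcases Nat.eq_zero_or_pos n' with h0 | h1
        · rw [h0, mul_zero] at hn'; omega
        · omega
      have hlt : α' < α := by
        calc α' = 1 * α' := (one_mul _).symm
          _ < p ^ 2 * α' := by
              exact Nat.mul_lt_mul_of_lt_of_le hp2 le_rfl (by omega)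
          _ = α := hα'.symm
      have hpz : ((p : ℤ)) ≠ 0 := by positivity
      have hseteq : {q : ℤ × ℤ | (n : ℤ) = q.1 ^ 2 + (α : ℤ) * q.2 ^ 2} =
          (fun q : ℤ × ℤ => ((p : ℤ) * q.1, q.2)) ''
            {q : ℤ × ℤ | (n' : ℤ) = q.1 ^ 2 + (α' : ℤ) * q.2 ^ 2} := by
        ext ⟨x, y⟩
        simp only [Set.mem_setOf_eq, Set.mem_image, Prod.mk.injEq, Prod.exists]
        constructor
        · intro hxy
          have hZ : ((p : ℤ)) ^ 2 * (n' : ℤ) = x ^ 2 + ((p : ℤ)) ^ 2 * (α' : ℤ) * y ^ 2 := by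
            have h1 : ((n : ℕ) : ℤ) = ((p ^ 2 * n' : ℕ) : ℤ) := by rw [← hn']
            have h2 : ((α : ℕ) : ℤ) = ((p ^ 2 * α' : ℕ) : ℤ) := by rw [← hα']
            push_cast at h1 h2
            rw [h1, h2] at hxy
            linarith
          have hpx2 : ((p : ℤ)) ^ 2 ∣ x ^ 2 :=
            ⟨(n' : ℤ) - (α' : ℤ) * y ^ 2, by linarith⟩
          have hpx : (p : ℤ) ∣ x :=
            (Nat.prime_iff_prime_int.mp hp).dvd_of_dvd_pow
              (dvd_trans (dvd_pow_self _ two_ne_zero) hpx2)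
          obtain ⟨x', hx'⟩ := hpx
          refine ⟨x', y, ?_, by rw [hx'], rfl⟩
          have hcancel : ((p : ℤ)) ^ 2 * (n' : ℤ) = ((p : ℤ)) ^ 2 * (x' ^ 2 + (α' : ℤ) * y ^ 2) := by
            rw [hZ, hx']; ring
          exact mul_left_cancel₀ (pow_ne_zero 2 hpz) hcancel
        · rintro ⟨x', y', hxy', hx, hy⟩
          subst hx; subst hy
          have h1 : ((n : ℕ) : ℤ) = ((p ^ 2 * n' : ℕ) : ℤ) := by rw [← hn']
          have h2 : ((α : ℕ) : ℤ) = ((p ^ 2 * α' : ℕ) : ℤ) := by rw [← hα']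
          push_cast at h1 h2
          rw [h1, h2]
          linear_combination ((p : ℤ)) ^ 2 * hxy'
      have hinj : Function.Injective (fun q : ℤ × ℤ => ((p : ℤ) * q.1, q.2)) := by
        intro q1 q2 h
        simp only [Prod.mk.injEq] at h
        exact Prod.ext (mul_left_cancel₀ hpz h.1) h.2
      rw [hseteq, Set.ncard_image_of_injective _ hinj]
      refine le_trans (IH α' hlt n' hα'1 hn'1) ?_
      have hdvd : n' ∣ n := ⟨p ^ 2, by rw [hn']; ring⟩
      have hτ : n'.divisors.card ≤ n.divisors.card :=
        Finset.card_le_card (Nat.divisors_subset_of_dvd (by omega) hdvd)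
      have := Nat.pow_le_pow_left hτ 2
      omega
    · push_neg at hex
      exact count_core α n hα hn (fun p hp h2α h2n => hex p hp h2α h2n)

theorem representation_count_le (α n : ℕ) (hα : 1 ≤ α) (hn : 1 ≤ n) :
    Set.ncard {p : ℤ × ℤ | (n : ℤ) = p.1 ^ 2 + (α : ℤ) * p.2 ^ 2} ≤
      6 * n.divisors.card ^ 2 := by
  exact main_aux α n hα hn
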